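/- If L : (0,∞) → (0,∞) is slowly varying, then lim_{x→∞} x^ρ L(x) = 0 for ρ < 0 and lim_{x→∞} x^ρ L(x) = ∞ for ρ > 0. -/

import Mathlib

open Filter MeasureTheory Set

/-- Egorov step: given a sequence of base points, the additive slow-variation differences
converge uniformly on a large subset of `[0,2]`. -/
lemma slowly_varying_egorov_step (h : ℝ → ℝ) (hm : Measurable h) (t : ℕ → ℝ)
    (hconv : ∀ s : ℝ, Tendsto (fun n => h (t n + s) - h (t n)) atTop (nhds 0))
    {ε : ℝ} (hε : 0 < ε) :
    ∃ F ⊆ Set.Icc (0:ℝ) 2, MeasurableSet F ∧ ENNReal.ofReal (7/4) ≤ volume F ∧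
      ∃ N : ℕ, ∀ n ≥ N, ∀ x ∈ F, |h (t n + x) - h (t n)| < ε := by
  have hsm : MeasurableSet (Set.Icc (0:ℝ) 2) := measurableSet_Icc
  have hsfin : volume (Set.Icc (0:ℝ) 2) ≠ ⊤ := by
    rw [Real.volume_Icc]; exact ENNReal.ofReal_ne_top
  have hmeasf : ∀ n : ℕ, StronglyMeasurable (fun x : ℝ => h (t n + x) - h (t n)) := by
    intro n
    exact ((hm.comp (measurable_const_add (t n))).sub measurable_const).stronglyMeasurable
  have hae : ∀ᵐ x ∂volume, x ∈ Set.Icc (0:ℝ) 2 →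
      Tendsto (fun n => h (t n + x) - h (t n)) atTop (nhds 0) :=
    ae_of_all _ (fun x _ => hconv x)
  obtain ⟨B, hBs, hBm, hBμ, hBu⟩ := MeasureTheory.tendstoUniformlyOn_of_ae_tendsto
    hmeasf stronglyMeasurable_const hsm hsfin hae (show (0:ℝ) < 1/4 by norm_num)
  refine ⟨Set.Icc 0 2 \ B, Set.diff_subset, hsm.diff hBm, ?_, ?_⟩
  · -- measure bound
    have hcover : Set.Icc (0:ℝ) 2 ⊆ (Set.Icc (0:ℝ) 2 \ B) ∪ B := by
      intro x hx
      by_cases hxB : x ∈ B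
      · exact Or.inr hxB
      · exact Or.inl ⟨hx, hxB⟩
    have h1 : volume (Set.Icc (0:ℝ) 2) ≤ volume (Set.Icc (0:ℝ) 2 \ B) + volume B :=
      le_trans (measure_mono hcover) (measure_union_le _ _)
    have h2 : ENNReal.ofReal 2 ≤ volume (Set.Icc (0:ℝ) 2 \ B) + ENNReal.ofReal (1/4) := by
      have : volume (Set.Icc (0:ℝ) 2) = ENNReal.ofReal 2 := by
        rw [Real.volume_Icc]; norm_num
      rw [← this]
      exact le_trans h1 (add_le_add_right hBμ _)
    have h3 : ENNReal.ofReal 2 - ENNReal.ofReal (1/4) ≤ volume (Set.Icc (0:ℝ) 2 \ B) :=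
      tsub_le_iff_right.mpr h2
    calc ENNReal.ofReal (7/4) = ENNReal.ofReal 2 - ENNReal.ofReal (1/4) := by
          rw [← ENNReal.ofReal_sub _ (by norm_num : (0:ℝ) ≤ 1/4)]; norm_num
      _ ≤ volume (Set.Icc (0:ℝ) 2 \ B) := h3
  · -- uniform convergence
    rw [Metric.tendstoUniformlyOn_iff] at hBu
    obtain ⟨N, hN⟩ := (eventually_atTop).mp (hBu ε hε)
    refine ⟨N, fun n hn x hx => ?_⟩
    have := hN n hn x hx
    rw [Real.dist_eq] at this
    simpa [abs_sub_comm] using this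
  
/-- Uniform convergence theorem for (additive) slowly varying functions. -/
lemma slowly_varying_unif (h : ℝ → ℝ) (hm : Measurable h)
    (hslow : ∀ s : ℝ, Tendsto (fun t => h (t + s) - h t) atTop (nhds 0))
    {ε : ℝ} (hε : 0 < ε) :
    ∃ T : ℝ, ∀ t ≥ T, ∀ u ∈ Set.Icc (0:ℝ) 1, |h (t + u) - h t| ≤ ε := by
  by_contra hcon
  push_neg at hcon
  choose t ht u hu hbad using fun n : ℕ => hcon n
  -- t n ≥ n, u n ∈ [0,1], ε < |h (t n + u n) - h (t n)|
  have htt : Tendsto t atTop atTop :=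
    tendsto_atTop_mono ht tendsto_natCast_atTop_atTop
  have htt' : Tendsto (fun n => t n + u n) atTop atTop := by
    apply tendsto_atTop_mono (fun n => ?_) htt
    exact le_add_of_nonneg_right (hu n).1
  have hconv1 : ∀ s : ℝ, Tendsto (fun n => h (t n + s) - h (t n)) atTop (nhds 0) :=
    fun s => (hslow s).comp htt
  have hconv2 : ∀ s : ℝ,
      Tendsto (fun n => h ((t n + u n) + s) - h (t n + u n)) atTop (nhds 0) :=
    fun s => (hslow s).comp htt'
  obtain ⟨F₁, hF₁s, hF₁m, hF₁μ, N₁, hN₁⟩ :=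
    slowly_varying_egorov_step h hm t hconv1 (half_pos hε)
  obtain ⟨F₂, hF₂s, hF₂m, hF₂μ, N₂, hN₂⟩ :=
    slowly_varying_egorov_step h hm (fun n => t n + u n) hconv2 (half_pos hε)
  set n := max N₁ N₂ with hn
  -- the translated set
  set G : Set ℝ := (fun x => x + (-(u n))) ⁻¹' F₂ with hG
  have hGm : MeasurableSet G := measurable_add_const (-(u n)) hF₂m
  have hGμ : volume G = volume F₂ := measure_preimage_add_right volume (-(u n)) F₂
  -- F₁ ∩ G is nonempty
  have hsub : F₁ ∪ G ⊆ Set.Icc (0:ℝ) 3 := by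
    intro x hx
    rcases hx with hx | hx
    · have := hF₁s hx
      exact ⟨this.1, le_trans this.2 (by norm_num)⟩
    · have hx2 : x - u n ∈ Set.Icc (0:ℝ) 2 := by
        have : x + (-(u n)) ∈ F₂ := hx
        have := hF₂s this
        rwa [← sub_eq_add_neg] at this
      have h1 := (hu n).1
      have h2 := (hu n).2
      constructor <;> [linarith [hx2.1]; linarith [hx2.2]]
  have hne : (F₁ ∩ G).Nonempty := by
    by_contra hemp
    rw [Set.not_nonempty_iff_eq_empty] at hemp
    have hdisj : Disjoint F₁ G := Set.disjoint_iff_inter_eq_empty.mpr hemp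
    have hun : volume (F₁ ∪ G) = volume F₁ + volume G := measure_union hdisj hGm
    have hle : volume (F₁ ∪ G) ≤ volume (Set.Icc (0:ℝ) 3) := measure_mono hsub
    rw [Real.volume_Icc, hun, hGμ] at hle
    have hge : ENNReal.ofReal (7/4) + ENNReal.ofReal (7/4) ≤ volume F₁ + volume F₂ :=
      add_le_add hF₁μ hF₂μ
    have : ENNReal.ofReal (7/4) + ENNReal.ofReal (7/4) ≤ ENNReal.ofReal (3 - 0) :=
      le_trans hge hle
    rw [← ENNReal.ofReal_add (by norm_num) (by norm_num)] at this
    have := (ENNReal.ofReal_le_ofReal_iff (by norm_num)).mp this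
    norm_num at this
  obtain ⟨s, hs₁, hs₂⟩ := hne
  have hsF₂ : s - u n ∈ F₂ := by rwa [sub_eq_add_neg]
  have e₁ : |h (t n + s) - h (t n)| < ε/2 := hN₁ n (le_max_left _ _) s hs₁
  have e₂ : |h ((t n + u n) + (s - u n)) - h (t n + u n)| < ε/2 :=
    hN₂ n (le_max_right _ _) (s - u n) hsF₂
  have hre : (t n + u n) + (s - u n) = t n + s := by ring
  rw [hre] at e₂
  have := hbad n
  have tri : |h (t n + u n) - h (t n)| ≤
      |h (t n + s) - h (t n + u n)| + |h (t n + s) - h (t n)| := by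
    have := abs_sub_abs_le_abs_sub (h (t n + u n) - h (t n)) 0
    calc |h (t n + u n) - h (t n)|
        = |(h (t n + s) - h (t n)) - (h (t n + s) - h (t n + u n))| := by ring_nf
      _ ≤ |h (t n + s) - h (t n)| + |h (t n + s) - h (t n + u n)| := abs_sub _ _
      _ = |h (t n + s) - h (t n + u n)| + |h (t n + s) - h (t n)| := by ring
  linarith

/-- If `h` is measurable and additively slowly varying, `h t / t → 0`. -/
lemma slowly_varying_ratio (h : ℝ → ℝ) (hm : Measurable h)
    (hslow : ∀ s : ℝ, Tendsto (fun t => h (t + s) - h t) atTop (nhds 0)) :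
    Tendsto (fun t => h t / t) atTop (nhds 0) := by
  rw [Metric.tendsto_atTop]
  intro ε hε
  obtain ⟨T, hT⟩ := slowly_varying_unif h hm hslow (show (0:ℝ) < ε/4 by linarith)
  -- chain bound
  have key : ∀ m : ℕ, ∀ r ∈ Set.Icc (0:ℝ) 1, |h (T + m + r) - h T| ≤ (m + 1) * (ε/4) := by
    intro m
    induction m with
    | zero =>
      intro r hr
      have := hT T le_rfl r hr
      simpa using this
    | succ m ih =>
      intro r hr
      have h0 : (0:ℝ) ≤ r := hr.1
      have hstep : |h ((T + m + r) + 1) - h (T + m + r)| ≤ ε/4 := by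
        apply hT (T + m + r) ?_ 1 ⟨zero_le_one, le_rfl⟩
        have : (0:ℝ) ≤ (m:ℝ) := Nat.cast_nonneg m
        linarith
      have ihr := ih r hr
      have hre : T + (m + 1 : ℕ) + r = (T + m + r) + 1 := by push_cast; ring
      rw [hre]
      calc |h ((T + m + r) + 1) - h T|
          ≤ |h ((T + m + r) + 1) - h (T + m + r)| + |h (T + m + r) - h T| :=
            abs_sub_le _ _ _
        _ ≤ ε/4 + (m + 1) * (ε/4) := add_le_add hstep ihr
        _ = ((m + 1 : ℕ) + 1) * (ε/4) := by push_cast; ring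
  -- bound |h t - h T| ≤ (t - T + 1) * (ε/4) for t ≥ T
  have bound : ∀ t ≥ T, |h t - h T| ≤ (t - T + 1) * (ε/4) := by
    intro t htT
    set m := ⌊t - T⌋₊ with hm'
    have h0 : (0:ℝ) ≤ t - T := by linarith
    have hfl : (m:ℝ) ≤ t - T := Nat.floor_le h0
    have hfu : t - T < m + 1 := Nat.lt_floor_add_one _
    have hr : t - T - m ∈ Set.Icc (0:ℝ) 1 := ⟨by linarith, by linarith⟩
    have := key m (t - T - m) hr
    have hte : T + m + (t - T - m) = t := by ring
    rw [hte] at this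
    calc |h t - h T| ≤ (m + 1) * (ε/4) := this
      _ ≤ (t - T + 1) * (ε/4) := by nlinarith
  -- conclude
  refine ⟨max (max T (1 - T)) (max 1 (4 * |h T| / ε)), fun t htN => ?_⟩
  have htT : t ≥ T := le_trans (le_trans (le_max_left _ _) (le_max_left _ _)) htN
  have ht1T : t ≥ 1 - T := le_trans (le_trans (le_max_right _ _) (le_max_left _ _)) htN
  have ht1 : t ≥ 1 := le_trans (le_trans (le_max_left _ _) (le_max_right _ _)) htN
  have htH : t ≥ 4 * |h T| / ε := le_trans (le_trans (le_max_right _ _) (le_max_right _ _)) htN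
  have htpos : 0 < t := lt_of_lt_of_le zero_lt_one ht1
  have hb := bound t htT
  have h1 : |h t| ≤ |h T| + (t - T + 1) * (ε/4) := by
    have := abs_sub_abs_le_abs_sub (h t) (h T)
    have tri : |h t| ≤ |h t - h T| + |h T| := by
      calc |h t| = |(h t - h T) + h T| := by ring_nf
        _ ≤ |h t - h T| + |h T| := abs_add_le _ _
    linarith
  have h2 : (t - T + 1) ≤ 2 * t := by linarith
  have h3 : |h T| ≤ t * ε / 4 := by
    rw [ge_iff_le, div_le_iff₀ hε] at htH
    linarith
  have h4 : |h t| ≤ t * ε / 4 + 2 * t * (ε/4) := by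
    have : (t - T + 1) * (ε/4) ≤ 2 * t * (ε/4) := by
      apply mul_le_mul_of_nonneg_right h2; linarith
    linarith
  have h5 : |h t| ≤ (3/4) * (t * ε) := by linarith
  rw [Real.dist_eq, sub_zero, abs_div, abs_of_pos htpos, div_lt_iff₀ htpos]
  calc |h t| ≤ (3/4) * (t * ε) := h5
    _ < t * ε := by nlinarith
    _ = ε * t := by ring

/-- If `L : (0,∞) → (0,∞)` is slowly varying (and measurable), then
`lim_{x→∞} x^ρ L(x) = 0` for `ρ < 0` and `lim_{x→∞} x^ρ L(x) = ∞` for `ρ > 0`. -/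
theorem slowly_varying_rpow_limit
    (L : ℝ → ℝ) (hLmeas : Measurable L) (hLpos : ∀ x > (0 : ℝ), 0 < L x)
    (hL : ∀ y > (0 : ℝ), Tendsto (fun x => L (x * y) / L x) atTop (nhds 1))
    (ρ : ℝ) :
    (ρ < 0 → Tendsto (fun x => x ^ ρ * L x) atTop (nhds 0)) ∧
    (0 < ρ → Tendsto (fun x => x ^ ρ * L x) atTop atTop) := by
  set h : ℝ → ℝ := fun t => Real.log (L (Real.exp t)) with hh
  have hmeas : Measurable h := (hLmeas.comp Real.measurable_exp).log
  have hslow : ∀ s : ℝ, Tendsto (fun t => h (t + s) - h t) atTop (nhds 0) := by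
    intro s
    have h1 : Tendsto (fun t : ℝ => L (Real.exp t * Real.exp s) / L (Real.exp t))
        atTop (nhds 1) := (hL (Real.exp s) (Real.exp_pos s)).comp Real.tendsto_exp_atTop
    have h2 : Tendsto (fun t : ℝ =>
        Real.log (L (Real.exp t * Real.exp s) / L (Real.exp t))) atTop (nhds 0) := by
      have := ((Real.continuousAt_log one_ne_zero).tendsto).comp h1
      simpa [Real.log_one, Function.comp_def] using this
    apply h2.congr
    intro t
    rw [Real.log_div (hLpos _ (by positivity)).ne' (hLpos _ (Real.exp_pos t)).ne']
    rw [hh]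
    simp [Real.exp_add]
  have hratio : Tendsto (fun t => h t / t) atTop (nhds 0) :=
    slowly_varying_ratio h hmeas hslow
  have hlog : Tendsto Real.log atTop atTop := Real.tendsto_log_atTop
  have hfactor : Tendsto (fun x => ρ + h (Real.log x) / Real.log x) atTop (nhds ρ) := by
    have := hratio.comp hlog
    have h2 : Tendsto (fun x => ρ + h (Real.log x) / Real.log x) atTop (nhds (ρ + 0)) :=
      tendsto_const_nhds.add this
    simpa using h2
  -- the key identity for x > 1
  have hident : ∀ᶠ x in atTop, Real.exp (Real.log x * (ρ + h (Real.log x) / Real.log x))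
      = x ^ ρ * L x := by
    filter_upwards [eventually_gt_atTop (1:ℝ)] with x hx1
    have hx : (0:ℝ) < x := lt_trans zero_lt_one hx1
    have hlx : 0 < Real.log x := Real.log_pos hx1
    have hLx : 0 < L x := hLpos x hx
    have hhl : h (Real.log x) = Real.log (L x) := by rw [hh]; simp [Real.exp_log hx]
    have harg : Real.log x * (ρ + h (Real.log x) / Real.log x)
        = ρ * Real.log x + Real.log (L x) := by
      rw [hhl]; field_simp
    rw [harg, Real.exp_add, Real.exp_log hLx, Real.rpow_def_of_pos hx, mul_comm ρ (Real.log x)]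
  constructor
  · intro hρ
    have hmul : Tendsto (fun x => Real.log x * (ρ + h (Real.log x) / Real.log x))
        atTop atBot := hlog.atTop_mul_neg hρ hfactor
    have := Real.tendsto_exp_atBot.comp hmul
    exact this.congr' hident
  · intro hρ
    have hmul : Tendsto (fun x => Real.log x * (ρ + h (Real.log x) / Real.log x))
        atTop atTop := hlog.atTop_mul_pos hρ hfactor
    have := Real.tendsto_exp_atTop.comp hmul
    exact this.congr' hident
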